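/- With the recursive definitions below, for every i with 1 <= i <= h-1 one has v_p(x_i) + v_p(i!) + i >= v_p(b). -/

import Mathlib

open Polynomial

/-- With the recursive definitions of `d_i`, `b_i`, `x_i` (Lemma `lem-ind-ab` of the paper),
for every `1 ≤ i ≤ h-1` one has `v_p(x_i) + v_p(i!) + i ≥ v_p(b)`.  Here `v_p` takes values
in `WithTop ℝ` (with `v_p(0) = ⊤`), `π = -p`, `E = u + p`, and the exact division
`(b_i - x_i i u)/E` is encoded by multiplying the recursion for `b_{i+1}` through by `E`. -/
theorem valuation_of_x_recursion {F : Type*} [Field F] (p : ℕ) (hp : p.Prime) (hodd : p ≠ 2)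
    (vp : F → WithTop ℝ)
    (hvp0 : vp 0 = ⊤)
    (hmul : ∀ x y : F, vp (x * y) = vp x + vp y)
    (hadd : ∀ x y : F, min (vp x) (vp y) ≤ vp (x + y))
    (hvpp : vp ((p : ℕ) : F) = ((1 : ℝ) : WithTop ℝ))
    (h : ℕ) (hh : 2 ≤ h)
    (a b c d : F)
    (had : (0 : WithTop ℝ) ≤ vp (a - d))
    (hbc : (0 : WithTop ℝ) ≤ vp (b * c))
    (D B : ℕ → Polynomial F) (x : ℕ → F)
    (hD1 : D 1 = C d) (hB1 : B 1 = C b) (hx1 : x 1 = b / (-(p : F)))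
    (hDrec : ∀ i, 1 ≤ i → i < h - 1 →
      D (i + 1) = D i + C c * C (x i) * (X + C (p : F)) ^ i)
    (hBrec : ∀ i, 1 ≤ i → i < h - 1 →
      (X + C (p : F)) * B (i + 1) =
        (X + C (p : F)) *
            (C (x i) * (C a - C c * (∑ j ∈ Finset.Icc 1 i, C (x j) * (X + C (p : F)) ^ j) - D i)) +
          (B i - (i : Polynomial F) * C (x i) * X))
    (hxrec : ∀ i, 1 ≤ i → i < h - 1 →
      x (i + 1) = (B (i + 1)).eval (-(p : F)) / (((i : F) + 1) * (-(p : F)))) :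
    ∀ i, 1 ≤ i → i ≤ h - 1 →
      vp b ≤ vp (x i) + ((padicValNat p (Nat.factorial i) : ℝ) : WithTop ℝ) + ((i : ℝ) : WithTop ℝ) := by
  haveI : Fact p.Prime := ⟨hp⟩
  -- ## basic facts about vp
  have hvp1 : vp 1 = 0 := by
    have h11 := hmul 1 1
    rw [mul_one] at h11
    rcases eq_or_ne (vp 1) ⊤ with h1 | h1
    · exfalso
      have hP := hmul ((p : ℕ) : F) 1
      rw [mul_one, h1, add_top, hvpp] at hP
      exact WithTop.coe_ne_top hP
    · lift vp 1 to ℝ using h1 with r hr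
      have hr2 : r = r + r := by exact_mod_cast h11
      have : r = 0 := by linarith
      exact_mod_cast congrArg (fun t : ℝ => (t : WithTop ℝ)) this
  have hvpneg : ∀ y : F, vp (-y) = vp y := by
    have hm1 : vp (-1 : F) = 0 := by
      have hq := hmul (-1 : F) (-1)
      rw [neg_mul_neg, one_mul, hvp1] at hq
      rcases eq_or_ne (vp (-1 : F)) ⊤ with h1 | h1
      · rw [h1, add_top] at hq; exact absurd hq (by simp)
      · lift vp (-1 : F) to ℝ using h1 with r hr
        have hr2 : (0 : ℝ) = r + r := by exact_mod_cast hq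
        have : r = 0 := by linarith
        exact_mod_cast congrArg (fun t : ℝ => (t : WithTop ℝ)) this
    intro y
    rw [show -y = -1 * y by ring, hmul, hm1, zero_add]
  have hvpnat : ∀ n : ℕ, 0 ≤ vp (n : F) := by
    intro n
    induction n with
    | zero => simp [hvp0]
    | succ n ih =>
      have hq := hadd (n : F) 1
      push_cast
      exact le_trans (le_min ih hvp1.ge) hq
  have hvpint : ∀ z : ℤ, 0 ≤ vp (z : F) := by
    intro z
    obtain ⟨n, rfl | rfl⟩ := z.eq_nat_or_neg
    · push_cast; exact hvpnat n
    · push_cast; rw [hvpneg]; exact hvpnat n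
  have hpne : (p : F) ≠ 0 := by
    intro h0
    rw [h0, hvp0] at hvpp
    exact absurd hvpp.symm (by simp)
  have hvpnatle : ∀ n : ℕ, 0 < n → vp (n : F) ≤ ((padicValNat p n : ℝ) : WithTop ℝ) := by
    intro n
    induction n using Nat.strong_induction_on with
    | _ n ih =>
      intro hn
      by_cases hdvd : p ∣ n
      · obtain ⟨m, rfl⟩ := hdvd
        have hm : 0 < m := by
          rcases Nat.eq_zero_or_pos m with rfl | hq
          · simp at hn
          · exact hq
        have hlt : m < p * m := by have := hp.two_le; nlinarith
        have hpv : padicValNat p (p * m) = 1 + padicValNat p m := by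
          rw [padicValNat.mul hp.pos.ne' hm.ne', padicValNat.self hp.one_lt]
        have hcast : ((p * m : ℕ) : F) = (p : F) * (m : F) := by push_cast; ring
        rw [hpv, hcast, hmul, hvpp]
        calc ((1:ℝ) : WithTop ℝ) + vp (m:F)
            ≤ ((1:ℝ):WithTop ℝ) + ((padicValNat p m : ℝ) : WithTop ℝ) :=
              add_le_add_right (ih m hlt hm) _
          _ = (((1 + padicValNat p m : ℕ) : ℝ) : WithTop ℝ) := by push_cast; ring
      · have hgoal0 : vp (n : F) ≤ 0 := ?_
        · rw [padicValNat.eq_zero_of_not_dvd hdvd]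
          simpa using hgoal0
        have hcop : Nat.gcd n p = 1 := Nat.coprime_comm.mp (hp.coprime_iff_not_dvd.mpr hdvd)
        have hb := Nat.gcd_eq_gcd_ab n p
        rw [hcop] at hb
        have h1F : (1 : F) = (n : F) * ((Nat.gcdA n p : ℤ) : F) + (p : F) * ((Nat.gcdB n p : ℤ) : F) := by
          exact_mod_cast congrArg (fun z : ℤ => ((z : F))) hb
        have hminle : min (vp ((n:F) * ((Nat.gcdA n p : ℤ) : F)))
            (vp ((p:F) * ((Nat.gcdB n p : ℤ) : F))) ≤ 0 := by
          calc _ ≤ vp ((n : F) * ((Nat.gcdA n p : ℤ) : F) + (p : F) * ((Nat.gcdB n p : ℤ) : F)) :=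
                hadd _ _
            _ = vp 1 := by rw [← h1F]
            _ = 0 := hvp1
        have h2 : (0 : WithTop ℝ) < vp ((p:F) * ((Nat.gcdB n p : ℤ) : F)) := by
          rw [hmul, hvpp]
          calc (0 : WithTop ℝ) < ((1:ℝ) : WithTop ℝ) := by exact_mod_cast one_pos
            _ = ((1:ℝ) : WithTop ℝ) + 0 := by rw [add_zero]
            _ ≤ _ := add_le_add_right (hvpint _) _
        have h3 : vp ((n:F) * ((Nat.gcdA n p : ℤ) : F)) ≤ 0 := by
          rcases min_le_iff.mp hminle with hq | hq
          · exact hq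
          · exact absurd hq (not_le.mpr h2)
        rw [hmul] at h3
        calc vp (n : F) = vp (n:F) + 0 := (add_zero _).symm
          _ ≤ vp (n:F) + vp ((Nat.gcdA n p : ℤ) : F) := add_le_add_right (hvpint _) _
          _ ≤ 0 := h3

  have hpvfact : ∀ s t : ℕ, padicValNat p (Nat.factorial s) + padicValNat p (Nat.factorial t)
      ≤ padicValNat p (Nat.factorial (s + t)) := by
    intro s t
    have hd : Nat.factorial s * Nat.factorial t ∣ Nat.factorial (s + t) :=
      Nat.factorial_mul_factorial_dvd_factorial_add s t
    have h1 : p ^ (padicValNat p (Nat.factorial s) + padicValNat p (Nat.factorial t))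
        ∣ Nat.factorial (s + t) := by
      rw [pow_add]
      exact (mul_dvd_mul pow_padicValNat_dvd pow_padicValNat_dvd).trans hd
    exact (padicValNat_dvd_iff_le (Nat.factorial_ne_zero _)).mp h1
  -- ## combination helpers
  have tri1 : ∀ (y z : F) (Cst : WithTop ℝ), vp b ≤ vp y + Cst → vp b ≤ vp z + Cst →
      vp b ≤ vp (y + z) + Cst := by
    intro y z Cst h1 h2
    have hm := hadd y z
    rcases min_le_iff.mp (le_refl (min (vp y) (vp z))) with hq | hq
    all_goals rcases min_cases (vp y) (vp z) with ⟨he, _⟩ | ⟨he, _⟩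
    all_goals rw [he] at hm
    · exact h1.trans (add_le_add_left hm _)
    · exact h2.trans (add_le_add_left hm _)
    · exact h1.trans (add_le_add_left hm _)
    · exact h2.trans (add_le_add_left hm _)
  have tri : ∀ (y z : F) (C1 C2 : WithTop ℝ), vp b ≤ vp y + C1 + C2 → vp b ≤ vp z + C1 + C2 →
      vp b ≤ vp (y + z) + C1 + C2 := by
    intro y z C1 C2 h1 h2
    rw [add_assoc] at h1 h2 ⊢
    exact tri1 y z _ h1 h2
  have trisub : ∀ (y z : F) (C1 C2 : WithTop ℝ), vp b ≤ vp y + C1 + C2 → vp b ≤ vp z + C1 + C2 →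
      vp b ≤ vp (y - z) + C1 + C2 := by
    intro y z C1 C2 h1 h2
    rw [sub_eq_add_neg]
    exact tri y (-z) C1 C2 h1 (by rw [hvpneg]; exact h2)
  have hprodbound : ∀ (u v : F) (A1 A2 : WithTop ℝ),
      vp b ≤ vp u + A1 → vp b ≤ vp v + A2 →
      vp b ≤ vp u + vp c + vp v + (A1 + A2) := by
    intro u v A1 A2 h1 h2
    have hbc' : (0:WithTop ℝ) ≤ vp b + vp c := by rw [← hmul]; exact hbc
    calc vp b = vp b + 0 := (add_zero _).symm
      _ ≤ vp b + (vp b + vp c) := add_le_add_right hbc' _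
      _ = (vp b + vp b) + vp c := by abel
      _ ≤ ((vp u + A1) + (vp v + A2)) + vp c := add_le_add_left (add_le_add h1 h2) _
      _ = vp u + vp c + vp v + (A1 + A2) := by abel
  -- ## polynomial layer
  have hEt : taylor (-(p:F)) (X + C (p : F)) = X := by
    rw [map_add, taylor_X, taylor_C, add_assoc, ← C_add, neg_add_cancel, C_0, add_zero]
  have hEpow : ∀ n : ℕ, taylor (-(p:F)) ((X + C (p:F))^n) = X ^ n := by
    intro n
    induction n with
    | zero => simp
    | succ n ihn => rw [pow_succ, taylor_mul, ihn, hEt, pow_succ]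
  have hXt : taylor (-(p:F)) (X : F[X]) = X + C (-(p:F)) := taylor_X _
  have hnatt : ∀ n : ℕ, taylor (-(p:F)) ((n : F[X])) = (n : F[X]) := by
    intro n; rw [← C_eq_natCast, taylor_C]
  have hsumtop : ∀ (f : ℕ → F[X]) (n : ℕ),
      ∑ j ∈ Finset.Icc 1 (n+1), f j = (∑ j ∈ Finset.Icc 1 n, f j) + f (n+1) := by
    intro f n
    exact Finset.sum_Icc_succ_top (Nat.le_add_left 1 n) f
  have hDtay : ∀ i, 1 ≤ i → i ≤ h - 1 →
      taylor (-(p:F)) (D i) = C d + C c * ∑ j ∈ Finset.Icc 1 (i-1), C (x j) * X ^ j := by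
    intro i hi
    induction i, hi using Nat.le_induction with
    | base => intro _; simp [hD1, taylor_C]
    | succ i hi ih =>
      intro hle
      have hlt : i < h - 1 := by omega
      have hih := ih (by omega)
      rw [hDrec i hi hlt, map_add, hih, taylor_mul, taylor_mul, taylor_C, taylor_C, hEpow]
      obtain ⟨m, rfl⟩ : ∃ m, i = m + 1 := ⟨i - 1, by omega⟩
      simp only [Nat.add_sub_cancel]
      rw [hsumtop]
      ring
  have hpoly : ∀ i, 1 ≤ i → i < h - 1 →
      X * taylor (-(p:F)) (B (i+1)) =
        X * (C (x i) * (C a - C c * (∑ j ∈ Finset.Icc 1 i, C (x j) * X ^ j) - taylor (-(p:F)) (D i)))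
        + (taylor (-(p:F)) (B i) - (i : Polynomial F) * C (x i) * (X + C (-(p:F)))) := by
    intro i hi hlt
    have h0 := congrArg (taylor (-(p:F))) (hBrec i hi hlt)
    simp only [taylor_mul, map_add, map_sub, map_sum, taylor_C, hEt, hEpow, hXt, hnatt] at h0
    exact h0
  have hAc : ∀ i, 1 ≤ i → i < h - 1 → ∀ k : ℕ,
      (taylor (-(p:F)) (B (i+1))).coeff k
        = x i * ((C a - C c * (∑ j ∈ Finset.Icc 1 i, C (x j) * X ^ j)
            - (C d + C c * ∑ j ∈ Finset.Icc 1 (i-1), C (x j) * X ^ j)).coeff k)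
          + (taylor (-(p:F)) (B i)).coeff (k+1)
          - ((i:F) * x i) * ((X + C (-(p:F))).coeff (k+1)) := by
    intro i hi hlt k
    have hc := congrArg (fun q : F[X] => q.coeff (k+1)) (hpoly i hi hlt)
    rw [hDtay i hi (by omega)] at hc
    simp only [coeff_X_mul] at hc
    rw [hc]
    rw [show ((i : F[X])) * C (x i) = C ((i:F) * x i) from by rw [← C_eq_natCast, ← C_mul]]
    simp only [coeff_X_mul, coeff_add, coeff_sub, coeff_C_mul]
    ring
  have hA0 : ∀ i, 1 ≤ i → i < h - 1 →
      (taylor (-(p:F)) (B (i+1))).coeff 0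
        = x i * (a - d) + (taylor (-(p:F)) (B i)).coeff 1 - (i:F) * x i := by
    intro i hi hlt
    have hc := hAc i hi hlt 0
    rw [hc]
    simp only [coeff_add, coeff_sub, coeff_C_mul, finset_sum_coeff, coeff_C, coeff_X_pow,
      coeff_X, mul_ite, mul_one, mul_zero]
    simp [Finset.sum_ite_eq', Finset.mem_Icc]
  have hAk : ∀ i, 1 ≤ i → i < h - 1 → ∀ k : ℕ,
      (taylor (-(p:F)) (B (i+1))).coeff (k+1)
        = x i * (-(c * (if k+1 ∈ Finset.Icc 1 i then x (k+1) else 0))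
            - c * (if k+1 ∈ Finset.Icc 1 (i-1) then x (k+1) else 0))
          + (taylor (-(p:F)) (B i)).coeff (k+2) := by
    intro i hi hlt k
    have hc := hAc i hi hlt (k+1)
    rw [hc]
    simp only [coeff_add, coeff_sub, coeff_C_mul, finset_sum_coeff, coeff_C, coeff_X_pow,
      coeff_X, mul_ite, mul_one, mul_zero]
    simp [Finset.sum_ite_eq', Finset.mem_Icc]
  -- ## main induction
  have main : ∀ i : ℕ, 1 ≤ i → i ≤ h - 1 →
      (vp b ≤ vp (x i) + ((padicValNat p (Nat.factorial i) : ℝ) : WithTop ℝ) + ((i:ℝ) : WithTop ℝ)) ∧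
      (∀ k : ℕ, vp b ≤ vp ((taylor (-(p:F)) (B i)).coeff (k+1))
          + ((padicValNat p (Nat.factorial (k+i)) : ℝ) : WithTop ℝ) + (((k+i : ℕ):ℝ) : WithTop ℝ)) := by
    intro i
    induction i using Nat.strong_induction_on with
    | _ i ih =>
      intro hi1 hile
      rcases eq_or_lt_of_le hi1 with h1 | h1
      · obtain rfl : i = 1 := h1.symm
        constructor
        · rw [hx1]
          rcases eq_or_ne b 0 with rfl | hb0
          · rw [zero_div, hvp0]
            simp
          · have hdm : b / (-(p:F)) * (-(p:F)) = b :=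
              div_mul_cancel₀ _ (neg_ne_zero.mpr hpne)
            have hv := hmul (b / (-(p:F))) (-(p:F))
            rw [hdm, hvpneg, hvpp] at hv
            rw [hv]
            norm_num [Nat.factorial_one, padicValNat.one]
        · intro k
          rw [hB1, taylor_C, coeff_C]
          simp [hvp0]
      · obtain ⟨m, rfl⟩ : ∃ m, i = m + 1 := ⟨i - 1, by omega⟩
        have hm1 : 1 ≤ m := by omega
        have hmlt : m < h - 1 := by omega
        have ihm := ih m (by omega) hm1 (by omega)
        -- the first coefficient bound (used for x (m+1))
        have hbound1 : vp b ≤ vp ((taylor (-(p:F)) (B m)).coeff 1)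
            + ((padicValNat p (Nat.factorial m) : ℝ) : WithTop ℝ) + ((m:ℝ) : WithTop ℝ) := by
          have := ihm.2 0
          simpa using this
        -- bound on the new coefficients
        have hH2 : ∀ k : ℕ, vp b ≤ vp ((taylor (-(p:F)) (B (m+1))).coeff (k+1))
            + ((padicValNat p (Nat.factorial (k+(m+1))) : ℝ) : WithTop ℝ)
            + (((k+(m+1) : ℕ):ℝ) : WithTop ℝ) := by
          intro k
          rw [hAk m hm1 hmlt k]
          apply tri
          · -- the term x m * S
            by_cases hkm : k + 1 ≤ m
            · have hk1 : 1 ≤ k + 1 := by omega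
              have ihk := ih (k+1) (by omega) hk1 (by omega)
              -- lower bound on vp of the product
              have hS : vp (x m) + vp c + vp (x (k+1)) ≤
                  vp (x m * (-(c * (if k+1 ∈ Finset.Icc 1 m then x (k+1) else 0))
                    - c * (if k+1 ∈ Finset.Icc 1 (m-1) then x (k+1) else 0))) := by
                rw [hmul, add_assoc]
                apply add_le_add_right
                rw [sub_eq_add_neg]
                refine le_trans (le_min ?_ ?_) (hadd _ _)
                · rw [if_pos (Finset.mem_Icc.mpr ⟨by omega, hkm⟩), hvpneg, hmul]
                · rw [hvpneg]
                  by_cases hk2 : k + 1 ∈ Finset.Icc 1 (m-1)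
                  · rw [if_pos hk2, hmul]
                  · rw [if_neg hk2, mul_zero, hvp0]
                    exact le_top
              have hcomb := hprodbound (x m) (x (k+1))
                (((padicValNat p (Nat.factorial m) : ℝ) : WithTop ℝ) + ((m:ℝ) : WithTop ℝ))
                (((padicValNat p (Nat.factorial (k+1)) : ℝ) : WithTop ℝ) + (((k+1 : ℕ):ℝ) : WithTop ℝ))
                (by rw [← add_assoc]; exact ihm.1) (by rw [← add_assoc]; exact ihk.1)
              refine hcomb.trans ?_
              have hfle : ((padicValNat p (Nat.factorial m) : ℝ) : WithTop ℝ)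
                  + ((padicValNat p (Nat.factorial (k+1)) : ℝ) : WithTop ℝ)
                  ≤ ((padicValNat p (Nat.factorial (k+(m+1))) : ℝ) : WithTop ℝ) := by
                have := hpvfact m (k+1)
                rw [show m + (k+1) = k + (m+1) from by omega] at this
                exact_mod_cast this
              have hnle : ((m:ℝ) : WithTop ℝ) + (((k+1 : ℕ):ℝ) : WithTop ℝ)
                  = (((k+(m+1) : ℕ):ℝ) : WithTop ℝ) := by
                rw [show k + (m+1) = m + (k+1) from by omega]
                push_cast
                rfl
              calc vp (x m) + vp c + vp (x (k+1)) +
                    ((((padicValNat p (Nat.factorial m) : ℝ) : WithTop ℝ) + ((m:ℝ) : WithTop ℝ)) +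
                     (((padicValNat p (Nat.factorial (k+1)) : ℝ) : WithTop ℝ) + (((k+1 : ℕ):ℝ) : WithTop ℝ)))
                  = (vp (x m) + vp c + vp (x (k+1))) +
                      ((((padicValNat p (Nat.factorial m) : ℝ) : WithTop ℝ) +
                        ((padicValNat p (Nat.factorial (k+1)) : ℝ) : WithTop ℝ)) +
                       (((m:ℝ) : WithTop ℝ) + (((k+1 : ℕ):ℝ) : WithTop ℝ))) := by abel
                _ ≤ (vp (x m * (-(c * (if k+1 ∈ Finset.Icc 1 m then x (k+1) else 0))
                      - c * (if k+1 ∈ Finset.Icc 1 (m-1) then x (k+1) else 0)))) +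
                      ((((padicValNat p (Nat.factorial (k+(m+1))) : ℝ) : WithTop ℝ)) +
                       ((((k+(m+1) : ℕ):ℝ) : WithTop ℝ))) := by
                    refine add_le_add hS (add_le_add hfle (le_of_eq hnle))
                _ = _ := by abel
            · -- both ifs are 0
              have hi1' : k + 1 ∉ Finset.Icc 1 m := by
                simp [Finset.mem_Icc]; omega
              have hi2' : k + 1 ∉ Finset.Icc 1 (m-1) := by
                simp [Finset.mem_Icc]; omega
              rw [if_neg hi1', if_neg hi2']
              simp only [mul_zero, sub_zero, neg_zero]
              rw [hvp0]
              simp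
          · -- the shifted coefficient
            have := ihm.2 (k+1)
            rw [show k + 1 + m = k + (m+1) from by omega] at this
            exact this
        refine ⟨?_, hH2⟩
        -- H1 for m+1
        have hx := hxrec m hm1 hmlt
        have he : (B (m+1)).eval (-(p:F)) =
            x m * (a - d) + (taylor (-(p:F)) (B m)).coeff 1 - (m:F) * x m := by
          rw [← taylor_coeff_zero]
          exact hA0 m hm1 hmlt
        have hbound_e : vp b ≤ vp ((B (m+1)).eval (-(p:F)))
            + ((padicValNat p (Nat.factorial m) : ℝ) : WithTop ℝ) + ((m:ℝ) : WithTop ℝ) := by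
          rw [he]
          apply trisub
          · apply tri
            · rw [hmul]
              calc vp b ≤ vp (x m) + ((padicValNat p (Nat.factorial m) : ℝ) : WithTop ℝ)
                    + ((m:ℝ) : WithTop ℝ) := ihm.1
                _ = vp (x m) + 0 + ((padicValNat p (Nat.factorial m) : ℝ) : WithTop ℝ)
                    + ((m:ℝ) : WithTop ℝ) := by rw [add_zero]
                _ ≤ vp (x m) + vp (a - d) + ((padicValNat p (Nat.factorial m) : ℝ) : WithTop ℝ)
                    + ((m:ℝ) : WithTop ℝ) := by
                      exact add_le_add_left (add_le_add_left (add_le_add_right had _) _) _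
            · exact hbound1
          · rw [hmul]
            calc vp b ≤ vp (x m) + ((padicValNat p (Nat.factorial m) : ℝ) : WithTop ℝ)
                  + ((m:ℝ) : WithTop ℝ) := ihm.1
              _ = 0 + vp (x m) + ((padicValNat p (Nat.factorial m) : ℝ) : WithTop ℝ)
                  + ((m:ℝ) : WithTop ℝ) := by rw [zero_add]
              _ ≤ vp ((m:F)) + vp (x m) + ((padicValNat p (Nat.factorial m) : ℝ) : WithTop ℝ)
                  + ((m:ℝ) : WithTop ℝ) := by
                    exact add_le_add_left (add_le_add_left (add_le_add_left (hvpnat m) _) _) _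
        by_cases hw : ((m:F) + 1) = 0
        · rw [hx, hw, zero_mul, div_zero, hvp0]
          simp
        · have hwne : ((m:F)+1) * (-(p:F)) ≠ 0 := mul_ne_zero hw (neg_ne_zero.mpr hpne)
          have he2 : (B (m+1)).eval (-(p:F)) = x (m+1) * (((m:F)+1) * (-(p:F))) := by
            rw [hx]
            field_simp
          have hv := hmul (x (m+1)) (((m:F)+1)*(-(p:F)))
          rw [← he2] at hv
          have hvw : vp (((m:F)+1)*(-(p:F))) ≤ ((padicValNat p (m+1) : ℝ) : WithTop ℝ)
              + ((1:ℝ) : WithTop ℝ) := by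
            rw [hmul, hvpneg, hvpp]
            have hc1 : ((m:F)+1) = ((m+1 : ℕ) : F) := by push_cast; ring
            rw [hc1]
            exact add_le_add_left (hvpnatle (m+1) (by omega)) _
          have hfacteq : padicValNat p (Nat.factorial (m+1))
              = padicValNat p (m+1) + padicValNat p (Nat.factorial m) := by
            rw [Nat.factorial_succ, padicValNat.mul (by omega) (Nat.factorial_ne_zero m)]
          calc vp b ≤ vp ((B (m+1)).eval (-(p:F)))
                + ((padicValNat p (Nat.factorial m) : ℝ) : WithTop ℝ) + ((m:ℝ) : WithTop ℝ) := hbound_e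
            _ = vp (x (m+1)) + vp (((m:F)+1)*(-(p:F)))
                + ((padicValNat p (Nat.factorial m) : ℝ) : WithTop ℝ) + ((m:ℝ) : WithTop ℝ) := by
                  rw [hv]
            _ ≤ vp (x (m+1)) + (((padicValNat p (m+1) : ℝ) : WithTop ℝ) + ((1:ℝ) : WithTop ℝ))
                + ((padicValNat p (Nat.factorial m) : ℝ) : WithTop ℝ) + ((m:ℝ) : WithTop ℝ) := by
                  exact add_le_add_left (add_le_add_left (add_le_add_right hvw _) _) _
            _ = vp (x (m+1)) + ((padicValNat p (Nat.factorial (m+1)) : ℝ) : WithTop ℝ)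
                + (((m+1 : ℕ):ℝ) : WithTop ℝ) := by
                  rw [hfacteq]
                  push_cast
                  abel
            _ = _ := by norm_num
  intro i hi1 hile
  exact (main i hi1 hile).1
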